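/- Let n be a positive integer, h ≥ 1 a real number, and μ a Borel measure on ℝ^n that is homogeneous of degree h. Let V be a Borel subset of the unit L¹ sphere {x ∈ ℝ^n : ‖x‖₁ = 1} with μ((0,1]·V) < ∞, and let f : ℝ^n → ℝ be a linear functional satisfying |f(x) − f(y)| ≤ K·‖x − y‖₁ for all x, y ∈ ℝ^n and f(u) ≥ c for all u ∈ V, where K ≥ 0 and c > 0. Let {U_i}_{i=1}^N be a finite partition of V into Borel sets, and for each i set m_i := inf_{u ∈ U_i} f(u) and M_i := sup_{u ∈ U_i} f(u) (so c ≤ m_i ≤ M_i ≤ m_i + K·diam₁(U_i) < ∞). Then Σ_{i=1}^N μ((0,1]·U_i) · (m_i^(−h) − M_i^(−h)) ≤ h · K · c^(−(h+1)) · μ((0,1]·V) · max_{1 ≤ i ≤ N} diam₁(U_i), where diam₁ denotes diameter with respect to the L¹ norm. -/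

import Mathlib

open MeasureTheory Set Pointwise

/-- The `L¹` norm on `ℝ^n`. -/
noncomputable def norm1 {n : ℕ} (x : Fin n → ℝ) : ℝ := ∑ i, |x i|

/-- Diameter of a subset of `ℝ^n` with respect to the `L¹` norm. -/
noncomputable def diam1 {n : ℕ} (U : Set (Fin n → ℝ)) : ℝ :=
  sSup {d | ∃ x ∈ U, ∃ y ∈ U, d = norm1 (x - y)}

lemma key_ineq {h c a b : ℝ} (hh : 1 ≤ h) (hc : 0 < c) (hca : c ≤ a) (hab : a ≤ b) :
    a ^ (-h) - b ^ (-h) ≤ h * c ^ (-(h+1)) * (b - a) := by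
  rcases eq_or_lt_of_le hab with rfl | hab'
  · simp
  have ha : 0 < a := lt_of_lt_of_le hc hca
  obtain ⟨ξ, hξ, hslope⟩ := exists_hasDerivAt_eq_slope (fun x => x ^ (-h))
      (fun x => -h * x ^ (-h - 1)) hab'
      (fun x hx => (Real.hasDerivAt_rpow_const
        (Or.inl (ne_of_gt (lt_of_lt_of_le ha hx.1)))).continuousAt.continuousWithinAt)
      (fun x hx => Real.hasDerivAt_rpow_const
        (Or.inl (ne_of_gt (lt_of_lt_of_le ha (le_of_lt hx.1)))))
  have hξc : c ≤ ξ := le_trans hca (le_of_lt hξ.1)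
  have hξ0 : 0 < ξ := lt_of_lt_of_le hc hξc
  have hba : 0 < b - a := by linarith
  have heq : a ^ (-h) - b ^ (-h) = h * ξ ^ (-h - 1) * (b - a) := by
    have := hslope
    field_simp at this ⊢
    nlinarith [this]
  rw [heq]
  have hξle : ξ ^ (-h - 1) ≤ c ^ (-h - 1) :=
    Real.rpow_le_rpow_of_nonpos hc hξc (by linarith)
  have : c ^ (-(h+1)) = c ^ (-h - 1) := by ring_nf
  rw [this]
  have hh0 : (0:ℝ) ≤ h := by linarith
  exact mul_le_mul_of_nonneg_right (mul_le_mul_of_nonneg_left hξle hh0) hba.le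

lemma norm1_smul {n : ℕ} (t : ℝ) (x : Fin n → ℝ) : norm1 (t • x) = |t| * norm1 x := by
  simp [norm1, abs_mul, Finset.mul_sum]

lemma norm1_sub_le {n : ℕ} (x y : Fin n → ℝ) : norm1 (x - y) ≤ norm1 x + norm1 y := by
  rw [norm1, norm1, norm1, ← Finset.sum_add_distrib]
  exact Finset.sum_le_sum fun i _ => abs_sub (x i) (y i)

lemma continuous_norm1 {n : ℕ} : Continuous (norm1 : (Fin n → ℝ) → ℝ) :=
  continuous_finset_sum _ fun i _ => (continuous_apply i).abs

lemma measurable_ray {n : ℕ} :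
    Measurable (fun x : Fin n → ℝ => (norm1 x)⁻¹ • x) := by
  apply measurable_pi_lambda
  intro i
  exact (continuous_norm1.measurable.inv).mul (measurable_pi_apply i)

lemma cone_eq {n : ℕ} (W : Set (Fin n → ℝ)) (hW : ∀ x ∈ W, norm1 x = 1) :
    Set.Ioc (0:ℝ) 1 • W
      = (fun x => norm1 x) ⁻¹' Set.Ioc (0:ℝ) 1 ∩ (fun x => (norm1 x)⁻¹ • x) ⁻¹' W := by
  ext x
  constructor
  · rintro hx
    obtain ⟨t, ht, u, hu, rfl⟩ := Set.mem_smul.1 hx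
    have hn : norm1 (t • u) = t := by
      rw [norm1_smul, hW u hu, abs_of_pos ht.1, mul_one]
    constructor
    · rw [Set.mem_preimage, hn]; exact ht
    · rw [Set.mem_preimage, hn, smul_smul, inv_mul_cancel₀ (ne_of_gt ht.1), one_smul]
      exact hu
  · rintro ⟨h1, h2⟩
    rw [Set.mem_preimage] at h1 h2
    refine Set.mem_smul.2 ⟨norm1 x, h1, (norm1 x)⁻¹ • x, h2, ?_⟩
    rw [smul_smul, mul_inv_cancel₀ (ne_of_gt h1.1), one_smul]

theorem leading_term_error
    (n N : ℕ) (hn : 0 < n) (hN : 0 < N) (h : ℝ) (hh : 1 ≤ h)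
    (μ : Measure (Fin n → ℝ))
    (hhom : ∀ t : ℝ, 0 < t → ∀ A : Set (Fin n → ℝ), MeasurableSet A →
      μ (t • A) = ENNReal.ofReal (t ^ h) * μ A)
    (V : Set (Fin n → ℝ)) (hVmeas : MeasurableSet V)
    (hVsph : ∀ x ∈ V, norm1 x = 1)
    (hVfin : μ (Set.Ioc (0:ℝ) 1 • V) < ⊤)
    (f : (Fin n → ℝ) →ₗ[ℝ] ℝ) (K c : ℝ) (hK : 0 ≤ K) (hc : 0 < c)
    (hlip : ∀ x y : Fin n → ℝ, |f x - f y| ≤ K * norm1 (x - y))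
    (hlow : ∀ u ∈ V, c ≤ f u)
    (U : Fin N → Set (Fin n → ℝ))
    (hUmeas : ∀ i, MeasurableSet (U i))
    (hUne : ∀ i, (U i).Nonempty)
    (hUcover : V = ⋃ i, U i)
    (hUdisj : Pairwise (Function.onFun Disjoint U)) :
    (∑ i, (μ (Set.Ioc (0:ℝ) 1 • U i)).toReal *
        ((sInf (f '' U i)) ^ (-h) - (sSup (f '' U i)) ^ (-h))) ≤
      h * K * c ^ (-(h + 1)) * (μ (Set.Ioc (0:ℝ) 1 • V)).toReal *
        Finset.univ.sup' ⟨⟨0, hN⟩, Finset.mem_univ _⟩ (fun i => diam1 (U i)) := by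
  have hUsubV : ∀ i, U i ⊆ V := fun i => hUcover ▸ Set.subset_iUnion U i
  have hUsph : ∀ i, ∀ x ∈ U i, norm1 x = 1 := fun i x hx => hVsph x (hUsubV i hx)
  -- cone sets
  have hconeU : ∀ i, Set.Ioc (0:ℝ) 1 • U i
      = (fun x => norm1 x) ⁻¹' Set.Ioc (0:ℝ) 1 ∩ (fun x => (norm1 x)⁻¹ • x) ⁻¹' U i :=
    fun i => cone_eq (U i) (hUsph i)
  have hconemeas : ∀ i, MeasurableSet (Set.Ioc (0:ℝ) 1 • U i) := by
    intro i
    rw [hconeU i]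
    exact (continuous_norm1.measurable measurableSet_Ioc).inter
      (measurable_ray (hUmeas i))
  have hconedisj : Pairwise (Function.onFun Disjoint
      (fun i => Set.Ioc (0:ℝ) 1 • U i)) := by
    intro i j hij
    rw [Function.onFun, hconeU i, hconeU j, Set.disjoint_left]
    rintro x ⟨_, hxi⟩ ⟨_, hxj⟩
    exact Set.disjoint_left.1 (hUdisj hij) hxi hxj
  have hconeunion : Set.Ioc (0:ℝ) 1 • V = ⋃ i, Set.Ioc (0:ℝ) 1 • U i := by
    rw [cone_eq V hVsph]
    ext x
    simp only [Set.mem_inter_iff, Set.mem_preimage, Set.mem_iUnion, hconeU, hUcover]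
    tauto
  have hsum : μ (Set.Ioc (0:ℝ) 1 • V) = ∑ i, μ (Set.Ioc (0:ℝ) 1 • U i) := by
    rw [hconeunion, measure_iUnion hconedisj hconemeas, tsum_fintype]
  have hfin : ∀ i, μ (Set.Ioc (0:ℝ) 1 • U i) ≠ ⊤ := by
    intro i
    refine ne_of_lt (lt_of_le_of_lt ?_ hVfin)
    rw [hconeunion]
    exact measure_mono (Set.subset_iUnion (fun j => Set.Ioc (0:ℝ) 1 • U j) i)
  have htsum : (μ (Set.Ioc (0:ℝ) 1 • V)).toReal
      = ∑ i, (μ (Set.Ioc (0:ℝ) 1 • U i)).toReal := by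
    rw [hsum, ENNReal.toReal_sum (fun i _ => hfin i)]
  set D := Finset.univ.sup' ⟨⟨0, hN⟩, Finset.mem_univ _⟩ (fun i => diam1 (U i)) with hD
  -- diameter facts
  have hdiam_bdd : ∀ i, BddAbove {d | ∃ x ∈ U i, ∃ y ∈ U i, d = norm1 (x - y)} := by
    intro i
    refine ⟨2, ?_⟩
    rintro d ⟨x, hx, y, hy, rfl⟩
    have := norm1_sub_le x y
    rw [hUsph i x hx, hUsph i y hy] at this
    linarith
  have hdiam_le : ∀ i, ∀ x ∈ U i, ∀ y ∈ U i, norm1 (x - y) ≤ diam1 (U i) := by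
    intro i x hx y hy
    exact le_csSup (hdiam_bdd i) ⟨x, hx, y, hy, rfl⟩
  have hdiam_nonneg : ∀ i, 0 ≤ diam1 (U i) := by
    intro i
    obtain ⟨u, hu⟩ := hUne i
    have h0 : norm1 (u - u) = 0 := by simp [norm1]
    have := hdiam_le i u hu u hu
    linarith
  have hdiam_le_D : ∀ i, diam1 (U i) ≤ D := fun i => Finset.le_sup' (fun j => diam1 (U j)) (Finset.mem_univ i)
  have hD0 : 0 ≤ D := le_trans (hdiam_nonneg ⟨0, hN⟩) (hdiam_le_D _)
  -- inf/sup facts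
  have hterm : ∀ i, (sInf (f '' U i)) ^ (-h) - (sSup (f '' U i)) ^ (-h)
      ≤ h * K * c ^ (-(h+1)) * D := by
    intro i
    obtain ⟨u0, hu0⟩ := hUne i
    have hne : (f '' U i).Nonempty := ⟨f u0, u0, hu0, rfl⟩
    have hbddb : BddBelow (f '' U i) := by
      refine ⟨c, ?_⟩
      rintro b ⟨u, hu, rfl⟩
      exact hlow u (hUsubV i hu)
    have hbdda : BddAbove (f '' U i) := by
      refine ⟨f u0 + K * diam1 (U i), ?_⟩
      rintro b ⟨u, hu, rfl⟩
      have h1 : f u - f u0 ≤ |f u - f u0| := le_abs_self _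
      have h2 := hlip u u0
      have h3 : K * norm1 (u - u0) ≤ K * diam1 (U i) :=
        mul_le_mul_of_nonneg_left (hdiam_le i u hu u0 hu0) hK
      linarith
    have hm : c ≤ sInf (f '' U i) := by
      refine le_csInf hne ?_
      rintro b ⟨u, hu, rfl⟩
      exact hlow u (hUsubV i hu)
    have hmM : sInf (f '' U i) ≤ sSup (f '' U i) := csInf_le_csSup hne hbddb hbdda
    have hMm : sSup (f '' U i) ≤ sInf (f '' U i) + K * diam1 (U i) := by
      refine csSup_le hne ?_
      rintro b ⟨u, hu, rfl⟩
      have : f u - K * diam1 (U i) ≤ sInf (f '' U i) := by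
        refine le_csInf hne ?_
        rintro b' ⟨v, hv, rfl⟩
        have h1 : f u - f v ≤ |f u - f v| := le_abs_self _
        have h2 := hlip u v
        have h3 : K * norm1 (u - v) ≤ K * diam1 (U i) :=
          mul_le_mul_of_nonneg_left (hdiam_le i u hu v hv) hK
        linarith
      linarith
    have hkey := key_ineq hh hc hm hmM
    have hcpow : 0 ≤ c ^ (-(h+1)) := le_of_lt (Real.rpow_pos_of_pos hc _)
    have hh0 : (0:ℝ) ≤ h := by linarith
    have hKd : sSup (f '' U i) - sInf (f '' U i) ≤ K * D := by
      have := mul_le_mul_of_nonneg_left (hdiam_le_D i) hK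
      linarith
    calc (sInf (f '' U i)) ^ (-h) - (sSup (f '' U i)) ^ (-h)
        ≤ h * c ^ (-(h+1)) * (sSup (f '' U i) - sInf (f '' U i)) := hkey
      _ ≤ h * c ^ (-(h+1)) * (K * D) := by
          exact mul_le_mul_of_nonneg_left hKd (mul_nonneg hh0 hcpow)
      _ = h * K * c ^ (-(h+1)) * D := by ring
  -- combine
  have hE0 : 0 ≤ h * K * c ^ (-(h+1)) * D := by
    have hcpow : 0 ≤ c ^ (-(h+1)) := le_of_lt (Real.rpow_pos_of_pos hc _)
    have hh0 : (0:ℝ) ≤ h := by linarith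
    positivity
  calc (∑ i, (μ (Set.Ioc (0:ℝ) 1 • U i)).toReal *
        ((sInf (f '' U i)) ^ (-h) - (sSup (f '' U i)) ^ (-h)))
      ≤ ∑ i, (μ (Set.Ioc (0:ℝ) 1 • U i)).toReal * (h * K * c ^ (-(h+1)) * D) := by
        refine Finset.sum_le_sum fun i _ => ?_
        exact mul_le_mul_of_nonneg_left (hterm i) ENNReal.toReal_nonneg
    _ = (μ (Set.Ioc (0:ℝ) 1 • V)).toReal * (h * K * c ^ (-(h+1)) * D) := by
        rw [htsum, Finset.sum_mul]
    _ = h * K * c ^ (-(h + 1)) * (μ (Set.Ioc (0:ℝ) 1 • V)).toReal * D := by ring
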